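/- (Fermat theorem at infinity) Let f : ℝⁿ → ℝ ∪ {±∞} be bounded below with finite infimum f_* := inf_{x ∈ ℝⁿ} f(x). If there exists a sequence x_k with ‖x_k‖ → ∞ such that f(x_k) → f_*, then 0 ∈ ∂f(∞). -/

import Mathlib

open Filter Topology Metric Set Bornology
open scoped InnerProductSpace Pointwise

noncomputable section

/-- Euclidean `n`-space. -/
abbrev En (n : ℕ) : Type := EuclideanSpace ℝ (Fin n)

/-- The Clarke tangent cone at infinity of `C ⊆ E`, where "going to infinity" is
measured by `‖p x‖ → ∞` for a projection map `p`:  `v` belongs to the cone iff for all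
sequences `x k ∈ C` with `‖p (x k)‖ → ∞` and all positive sequences `t k → 0` there is a
sequence `w k → v` with `x k + t k • w k ∈ C` for all `k`. -/
def tangentConeAtInfty {E F : Type*} [NormedAddCommGroup E] [NormedSpace ℝ E] [Norm F]
    (p : E → F) (C : Set E) : Set E :=
  {v | ∀ (x : ℕ → E) (t : ℕ → ℝ), (∀ k, x k ∈ C) →
      Tendsto (fun k => ‖p (x k)‖) atTop atTop →
      (∀ k, 0 < t k) → Tendsto t atTop (𝓝 0) →
      ∃ w : ℕ → E, Tendsto w atTop (𝓝 v) ∧ ∀ k, x k + t k • w k ∈ C}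

/-- The epigraph of an extended-real-valued function. -/
def epig {n : ℕ} (f : En n → EReal) : Set (En n × ℝ) := {p | f p.1 ≤ (p.2 : EReal)}

/-- Clarke tangent cone at infinity of the epigraph of `f`, with respect to the index set
`I = {1,…,n} ⊆ {1,…,n+1}`, i.e. the projection `(x, y) ↦ x`. -/
def Tepi {n : ℕ} (f : En n → EReal) : Set (En n × ℝ) :=
  tangentConeAtInfty Prod.fst (epig f)

/-- Normal cone at infinity of the epigraph of `f` (polar cone of `Tepi f`, using the
inner product `⟪(v,r), (w,s)⟫ = ⟪v,w⟫ + r*s` of `ℝⁿ × ℝ = ℝ^{n+1}`). -/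
def Nepi {n : ℕ} (f : En n → EReal) : Set (En n × ℝ) :=
  {w | ∀ q ∈ Tepi f, ⟪q.1, w.1⟫_ℝ + q.2 * w.2 ≤ 0}

/-- The set `∂f(∞)` of subgradients of `f` at infinity. -/
def subgradInfty {n : ℕ} (f : En n → EReal) : Set (En n) :=
  {ξ | (ξ, (-1:ℝ)) ∈ Nepi f}

/-- Proposition 4.4 (Fermat theorem at infinity): if `f` has finite infimum `f⋆` and
there is a sequence `x k → ∞` with `f (x k) → f⋆`, then `0 ∈ ∂f(∞)`. -/
theorem stmt6 (n : ℕ) (f : En n → EReal) (fstar : ℝ)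
    (hinf : (⨅ x : En n, f x) = (fstar : EReal))
    (x : ℕ → En n)
    (hx : Tendsto (fun k => ‖x k‖) atTop atTop)
    (hfx : Tendsto (fun k => f (x k)) atTop (𝓝 (fstar : EReal))) :
    (0 : En n) ∈ subgradInfty f := by
  have hlb : ∀ y, (fstar : EReal) ≤ f y := by
    intro y
    have := iInf_le f y
    rwa [hinf] at this
  simp only [subgradInfty, Nepi, Set.mem_setOf_eq]
  intro q hq
  rw [inner_zero_right]
  suffices h : (0 : ℝ) ≤ q.2 by nlinarith
  -- find a tail where `f (x k)` is finite
  have hlt : (fstar : EReal) < ((fstar + 1 : ℝ) : EReal) := by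
    exact_mod_cast lt_add_one fstar
  obtain ⟨N, hN⟩ := eventually_atTop.1 (hfx.eventually_lt_const hlt)
  set x' : ℕ → En n := fun k => x (k + N) with hx'def
  have hfin_top : ∀ k, f (x' k) ≠ ⊤ := fun k =>
    (hN (k + N) (Nat.le_add_left N k)).ne_top
  have hfin_bot : ∀ k, f (x' k) ≠ ⊥ := fun k =>
    fun hb => by simpa [hb] using hlb (x' k)
  set r : ℕ → ℝ := fun k => (f (x' k)).toReal with hrdef
  have hr : ∀ k, f (x' k) = ((r k : ℝ) : EReal) := fun k =>
    (EReal.coe_toReal (hfin_top k) (hfin_bot k)).symm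
  have hfx' : Tendsto (fun k => f (x' k)) atTop (𝓝 (fstar : EReal)) :=
    hfx.comp (tendsto_add_atTop_nat N)
  have hrt : Tendsto r atTop (𝓝 fstar) := by
    have := (EReal.tendsto_toReal (by simp) (by simp)).comp hfx'
    exact this
  have hr_ge : ∀ k, fstar ≤ r k := fun k => by
    have := hlb (x' k)
    rw [hr k] at this
    exact_mod_cast this
  set δ : ℕ → ℝ := fun k => r k - fstar with hδdef
  have hδ0 : ∀ k, 0 ≤ δ k := fun k => by simp [hδdef]; linarith [hr_ge k]
  have hδt : Tendsto δ atTop (𝓝 0) := by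
    have := hrt.sub (tendsto_const_nhds (x := fstar))
    simpa using this
  set t : ℕ → ℝ := fun k => Real.sqrt (δ k) + 1 / (k + 1) with htdef
  have htpos : ∀ k, 0 < t k := fun k => by
    have := Real.sqrt_nonneg (δ k)
    have h1 : (0:ℝ) < 1 / ((k:ℝ) + 1) := by positivity
    simp only [htdef]; linarith
  have hsqrtt : Tendsto (fun k => Real.sqrt (δ k)) atTop (𝓝 0) := by
    have := (Real.continuous_sqrt.tendsto 0).comp hδt
    simpa using (show Tendsto (fun k => Real.sqrt (δ k)) atTop (𝓝 (Real.sqrt 0)) from this)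
  have htt : Tendsto t atTop (𝓝 0) := by
    have := hsqrtt.add tendsto_one_div_add_atTop_nhds_zero_nat
    simp only [htdef]
    simpa using this
  -- apply the tangent cone property
  have hmem : ∀ k, ((x' k, r k) : En n × ℝ) ∈ epig f := fun k => by
    simp [epig, hr k]
  have hnorm : Tendsto (fun k => ‖(((x' k, r k) : En n × ℝ)).1‖) atTop atTop :=
    hx.comp (tendsto_add_atTop_nat N)
  obtain ⟨w, hwt, hw⟩ := hq (fun k => (x' k, r k)) t hmem hnorm htpos htt
  -- from membership in epigraph, the key inequality
  have key : ∀ k, -(w k).2 ≤ δ k / t k := by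
    intro k
    have h1 := hw k
    simp only [epig, Set.mem_setOf_eq, Prod.fst_add, Prod.snd_add, Prod.smul_fst,
      Prod.smul_snd, smul_eq_mul] at h1
    have h2 := hlb ((x' k, r k).1 + t k • (w k).1)
    have h3 : (fstar : EReal) ≤ (((r k + t k * (w k).2 : ℝ)) : EReal) := le_trans h2 h1
    have h4 : fstar ≤ r k + t k * (w k).2 := by exact_mod_cast h3
    rw [le_div_iff₀ (htpos k)]
    simp only [hδdef]
    nlinarith
  have hquot0 : Tendsto (fun k => δ k / t k) atTop (𝓝 0) := by
    apply tendsto_of_tendsto_of_tendsto_of_le_of_le (tendsto_const_nhds (x := (0:ℝ)))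
      hsqrtt
    · intro k; exact div_nonneg (hδ0 k) (htpos k).le
    · intro k
      rw [div_le_iff₀ (htpos k)]
      have habs : ∀ d c : ℝ, 0 ≤ d → 0 < c → d ≤ Real.sqrt d * (Real.sqrt d + c) := by
        intro d c hd hc
        nlinarith [Real.mul_self_sqrt hd, mul_nonneg (Real.sqrt_nonneg d) hc.le]
      have h1 : (0:ℝ) < 1 / ((k:ℝ) + 1) := by positivity
      exact habs (δ k) (1 / ((k:ℝ) + 1)) (hδ0 k) h1
  have hwsnd : Tendsto (fun k => -(w k).2) atTop (𝓝 (-q.2)) :=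
    ((continuous_snd.tendsto q).comp hwt).neg
  have : -q.2 ≤ 0 := le_of_tendsto_of_tendsto' hwsnd hquot0 key
  linarith
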